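/- arXiv:2004.01209 — 6 statements merged into one kernel-verified Lean document; each statement's English description precedes it below -/
import Mathlib

section
/- Let (X,𝒫₁,𝒫₂) be a strongly pairwise regular bispace satisfying condition C(2). If each pairwise open cover 𝒞 of X has a countably locally finite parallel refinement (a parallel refinement 𝒱 of 𝒞 expressible as 𝒱 = ⋃_{n∈ℕ} 𝒱ₙ where for each n, every x ∈ X has a 𝒫_{𝒞x}-open neighborhood intersecting only finitely many members of 𝒱ₙ), then each pairwise open cover of X has a locally finite refinement. -/
open Set

variable {X : Type*}

/-- A σ-space structure: contains ∅ and univ, closed under countable unions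
and finite (binary) intersections. -/
def IsSigmaStructure (P : Set (Set X)) : Prop :=
  ∅ ∈ P ∧ Set.univ ∈ P ∧
  (∀ S : Set (Set X), S.Countable → S ⊆ P → ⋃₀ S ∈ P) ∧
  (∀ U ∈ P, ∀ V ∈ P, U ∩ V ∈ P)

/-- The 𝒫-closure of M: intersection of all 𝒫-closed sets containing M. -/
def sCl (P : Set (Set X)) (M : Set X) : Set X :=
  ⋂₀ {F | Fᶜ ∈ P ∧ M ⊆ F}

/-- A collection is locally finite if every point has a 𝒫-open neighborhood
meeting only finitely many members. -/
def SLocallyFinite (P : Set (Set X)) (A : Set (Set X)) : Prop :=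
  ∀ x : X, ∃ N ∈ P, x ∈ N ∧ {a ∈ A | (a ∩ N).Nonempty}.Finite

/-- A pairwise open cover of the bispace (X, P, Q). -/
def PairwiseOpenCover (P Q : Set (Set X)) (B : Set (Set X)) : Prop :=
  ⋃₀ B = Set.univ ∧ B ⊆ P ∪ Q ∧
  (∃ U ∈ B, U ∈ P ∧ U.Nonempty) ∧ (∃ V ∈ B, V ∈ Q ∧ V.Nonempty)

/-- B is a parallel refinement of the pairwise open cover A. -/
def ParallelRefinement (P Q : Set (Set X)) (A B : Set (Set X)) : Prop :=
  PairwiseOpenCover P Q B ∧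
  (∀ U ∈ B, U ∈ P → ∃ V ∈ A, V ∈ P ∧ U ⊆ V) ∧
  (∀ U ∈ B, U ∈ Q → ∃ V ∈ A, V ∈ Q ∧ U ⊆ V)

/-- M is 𝒫_{𝒰x}-open. -/
def PUxOpen (P Q : Set (Set X)) (U : Set (Set X)) (x : X) (M : Set X) : Prop :=
  ((∃ W ∈ U, W ∈ P ∧ x ∈ W) ∧ M ∈ P) ∨ ((∃ W ∈ U, W ∈ Q ∧ x ∈ W) ∧ M ∈ Q)

/-- B is a locally finite refinement of the pairwise open cover A. -/
def LocallyFiniteRefinement (P Q : Set (Set X)) (A B : Set (Set X)) : Prop :=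
  ⋃₀ B = Set.univ ∧ (∀ b ∈ B, ∃ a ∈ A, b ⊆ a) ∧
  ∀ x : X, ∃ N, PUxOpen P Q A x N ∧ x ∈ N ∧ {b ∈ B | (b ∩ N).Nonempty}.Finite

/-- Pairwise paracompactness: every pairwise open cover has a parallel
refinement which is a locally finite refinement of it. -/
def PairwiseParacompact (P Q : Set (Set X)) : Prop :=
  ∀ A, PairwiseOpenCover P Q A →
    ∃ B, ParallelRefinement P Q A B ∧ LocallyFiniteRefinement P Q A B

def PairwiseHausdorff (P Q : Set (Set X)) : Prop :=
  ∀ x y : X, x ≠ y → ∃ U ∈ P, ∃ V ∈ Q, x ∈ U ∧ y ∈ V ∧ U ∩ V = ∅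

def PairwiseNormal (P Q : Set (Set X)) : Prop :=
  ∀ F₁ F₂ : Set X, F₁ᶜ ∈ P → F₂ᶜ ∈ Q → F₁ ∩ F₂ = ∅ →
    ∃ G₁ ∈ P, ∃ G₂ ∈ Q, F₁ ⊆ G₂ ∧ F₂ ⊆ G₁ ∧ G₁ ∩ G₂ = ∅

/-- P is regular with respect to Q. -/
def RegularWrt (P Q : Set (Set X)) : Prop :=
  ∀ (x : X) (F : Set X), Fᶜ ∈ P → x ∉ F →
    ∃ U ∈ P, ∃ V ∈ Q, x ∈ U ∧ F ⊆ V ∧ U ∩ V = ∅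

def PairwiseRegular (P Q : Set (Set X)) : Prop :=
  RegularWrt P Q ∧ RegularWrt Q P

/-- Regularity of a single σ-space. -/
def SRegular (P : Set (Set X)) : Prop := RegularWrt P P

def StronglyPairwiseRegular (P Q : Set (Set X)) : Prop :=
  PairwiseRegular P Q ∧ SRegular P ∧ SRegular Q

/-- Half of condition C(1). -/
def CondC1Half (P Q : Set (Set X)) : Prop :=
  ∀ (FA FB : Set (Set X)), FA ⊆ P → (∀ F ∈ FB, Fᶜ ∈ Q) →
    ⋃₀ FA ⊆ ⋂₀ FB → ∃ K ∈ P, ⋃₀ FA ⊆ K ∧ K ⊆ ⋂₀ FB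

/-- Condition C(1). -/
def CondC1 (P Q : Set (Set X)) : Prop := CondC1Half P Q ∧ CondC1Half Q P

/-- Condition C(2) for a fixed i (Pi ∈ {P, Q}). -/
def CondC2Half (P Q Pi : Set (Set X)) : Prop :=
  ∀ (M : Set X) (B : Set (Set X)), B ⊆ P ∪ Q →
    (∀ b ∈ B, sCl Pi b ∩ M = ∅) →
    ∃ S ∈ Pi, M ⊆ S ∧ S ⊆ (⋃ b ∈ B, sCl Pi b)ᶜ

/-- Condition C(2). -/
def CondC2 (P Q : Set (Set X)) : Prop := CondC2Half P Q P ∧ CondC2Half P Q Q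

/-- Paracompactness of a single σ-space: every open cover has a locally
finite open refinement covering X. -/
def SParacompact (P : Set (Set X)) : Prop :=
  ∀ A ⊆ P, ⋃₀ A = Set.univ →
    ∃ B ⊆ P, ⋃₀ B = Set.univ ∧ (∀ b ∈ B, ∃ a ∈ A, b ⊆ a) ∧ SLocallyFinite P B

lemma subset_sCl (P : Set (Set X)) (M : Set X) : M ⊆ sCl P M :=
  fun _y hy => Set.mem_sInter.mpr (fun _F hF => hF.2 hy)

lemma notMem_sCl_of_sep {P : Set (Set X)} {G : Set X} {x : X}
    {U : Set X} (hU : U ∈ P) (hxU : x ∈ U) (hUG : U ∩ G = ∅) : x ∉ sCl P G := by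
  intro hx
  have hGU : G ⊆ Uᶜ := fun z hz hzU =>
    (Set.eq_empty_iff_forall_notMem.mp hUG z) ⟨hzU, hz⟩
  have hxUc : x ∈ Uᶜ := Set.mem_sInter.mp hx Uᶜ ⟨by simpa using hU, hGU⟩
  exact hxUc hxU

/-- Key lemma: in a strongly pairwise regular bispace satisfying (half of) C(2),
every point has a `Pi`-open "minimal neighborhood" contained in every
(`P`- or `Q`-) open set containing the point. -/
lemma key_min {P Q Pi Pj : Set (Set X)} (hunion : Pi ∪ Pj = P ∪ Q)
    (hii : RegularWrt Pi Pi) (hji : RegularWrt Pj Pi)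
    (hC2 : CondC2Half P Q Pi) (x : X) :
    ∃ S, S ∈ Pi ∧ x ∈ S ∧ ∀ O, O ∈ P ∪ Q → x ∈ O → S ⊆ O := by
  obtain ⟨S, hSPi, hxS, hSc⟩ := hC2 {x} {b | b ∈ P ∪ Q ∧ x ∉ sCl Pi b}
    (fun _b hb => hb.1)
    (by
      intro b hb
      apply Set.eq_empty_iff_forall_notMem.mpr
      rintro z ⟨hz1, hz2⟩
      rw [Set.mem_singleton_iff] at hz2
      subst hz2
      exact hb.2 hz1)
  have hkill : ∀ {G : Set X}, G ∈ P ∪ Q → x ∉ sCl Pi G →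
      ∀ {z : X}, z ∈ S → z ∉ sCl Pi G := by
    intro G hG hxG z hz hzc
    exact (hSc hz) (Set.mem_biUnion
      (show G ∈ {b | b ∈ P ∪ Q ∧ x ∉ sCl Pi b} from ⟨hG, hxG⟩) hzc)
  have minPi : ∀ O ∈ Pi, x ∈ O → S ⊆ O := by
    intro O hO hxO z hz
    obtain ⟨U, hU, V, hV, hxU, hFV, hUV⟩ :=
      hii x Oᶜ (by simpa using hO) (fun hc => hc hxO)
    have hxnV : x ∉ sCl Pi V := notMem_sCl_of_sep hU hxU hUV
    have hVPQ : V ∈ P ∪ Q := hunion ▸ (Set.mem_union_left Pj hV)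
    by_contra hzO
    exact hkill hVPQ hxnV hz (subset_sCl Pi V (hFV hzO))
  have step2 : ∀ y ∈ S, ∀ O ∈ Pi, y ∈ O → x ∈ O := by
    intro y hyS O hO hyO
    by_contra hxO
    obtain ⟨U, hU, V, hV, hyU, hFV, hUV⟩ :=
      hii y Oᶜ (by simpa using hO) (fun hc => hc hyO)
    have hyV : y ∈ V := minPi V hV (hFV hxO) hyS
    exact (Set.eq_empty_iff_forall_notMem.mp hUV y) ⟨hyU, hyV⟩
  have minPj : ∀ O ∈ Pj, x ∈ O → S ⊆ O := by
    intro O hO hxO z hz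
    by_contra hzO
    obtain ⟨U, hU, G, hG, hxU, hFG, hUG⟩ :=
      hji x Oᶜ (by simpa using hO) (fun hc => hc hxO)
    have hxG : x ∈ G := step2 z hz G hG (hFG hzO)
    exact (Set.eq_empty_iff_forall_notMem.mp hUG x) ⟨hxU, hxG⟩
  refine ⟨S, hSPi, hxS rfl, fun O hO hxO => ?_⟩
  have hO' : O ∈ Pi ∪ Pj := by rw [hunion]; exact hO
  rcases hO' with hcase | hcase
  · exact minPi O hcase hxO
  · exact minPj O hcase hxO

theorem stmt_2 {X : Type*} (P Q : Set (Set X))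
    (hP : IsSigmaStructure P) (hQ : IsSigmaStructure Q)
    (hReg : StronglyPairwiseRegular P Q) (hC2 : CondC2 P Q)
    (h : ∀ C, PairwiseOpenCover P Q C →
      ∃ V : ℕ → Set (Set X),
        ParallelRefinement P Q C (⋃ n, V n) ∧
        ∀ n, ∀ x : X, ∃ N, PUxOpen P Q C x N ∧ x ∈ N ∧
          {b ∈ V n | (b ∩ N).Nonempty}.Finite) :
    ∀ C, PairwiseOpenCover P Q C → ∃ B, LocallyFiniteRefinement P Q C B := by
  classical
  intro C hC
  obtain ⟨Vf, hPR, hlf⟩ := h C hC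
  have h𝒱PQ : (⋃ n, Vf n) ⊆ P ∪ Q := hPR.1.2.1
  have h𝒱cov : ⋃₀ (⋃ n, Vf n) = Set.univ := hPR.1.1
  -- level of a member : least n with V ∈ Vf n
  let ℓ : Set X → ℕ := fun V => sInf {n | V ∈ Vf n}
  have hℓmem : ∀ V ∈ (⋃ n, Vf n), V ∈ Vf (ℓ V) := by
    intro V hV
    have hne : {n | V ∈ Vf n}.Nonempty := by
      rcases Set.mem_iUnion.mp hV with ⟨n, hn⟩
      exact ⟨n, hn⟩
    exact Nat.sInf_mem hne
  -- the Michael-type refinement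
  let A : Set X → Set X :=
    fun V => V \ ⋃₀ {V' | V' ∈ (⋃ n, Vf n) ∧ ℓ V' < ℓ V}
  have hAsub : ∀ V, A V ⊆ V := fun V => Set.diff_subset
  -- first-level member at each point
  have hfirst : ∀ x : X, ∃ V₀, V₀ ∈ (⋃ n, Vf n) ∧ x ∈ V₀ ∧
      ∀ V' ∈ (⋃ n, Vf n), x ∈ V' → ℓ V₀ ≤ ℓ V' := by
    intro x
    have hx : x ∈ ⋃₀ (⋃ n, Vf n) := h𝒱cov ▸ Set.mem_univ x
    rcases Set.mem_sUnion.mp hx with ⟨V, hV, hxV⟩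
    have hne : {n | ∃ V', V' ∈ (⋃ n, Vf n) ∧ x ∈ V' ∧ ℓ V' = n}.Nonempty :=
      ⟨ℓ V, V, hV, hxV, rfl⟩
    obtain ⟨V₀, hV₀, hxV₀, hℓV₀⟩ := Nat.sInf_mem hne
    refine ⟨V₀, hV₀, hxV₀, fun V' hV' hxV' => ?_⟩
    rw [hℓV₀]
    exact Nat.sInf_le ⟨V', hV', hxV', rfl⟩
  refine ⟨A '' (⋃ n, Vf n), ?_, ?_, ?_⟩
  · -- the refinement covers X
    apply Set.eq_univ_of_forall
    intro x
    obtain ⟨V₀, hV₀, hxV₀, hmin⟩ := hfirst x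
    have hxA : x ∈ A V₀ := by
      refine ⟨hxV₀, ?_⟩
      rintro ⟨V', ⟨hV'𝒱, hlt⟩, hxV'⟩
      exact absurd (hmin V' hV'𝒱 hxV') (by omega)
    exact Set.mem_sUnion.mpr ⟨A V₀, ⟨V₀, hV₀, rfl⟩, hxA⟩
  · -- it refines C
    rintro b ⟨V, hV, rfl⟩
    rcases h𝒱PQ hV with hVP | hVQ
    · obtain ⟨a, haC, _, hVa⟩ := hPR.2.1 V hV hVP
      exact ⟨a, haC, (hAsub V).trans hVa⟩
    · obtain ⟨a, haC, _, hVa⟩ := hPR.2.2 V hV hVQ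
      exact ⟨a, haC, (hAsub V).trans hVa⟩
  · -- local finiteness
    intro x
    obtain ⟨W, hWC, hxW⟩ := Set.mem_sUnion.mp (hC.1 ▸ Set.mem_univ x)
    choose Nw hNw1 hNw2 hNw3 using fun n => hlf n x
    have hNwPQ : ∀ n, Nw n ∈ P ∪ Q := by
      intro n
      rcases hNw1 n with ⟨_, hp⟩ | ⟨_, hq⟩
      · exact Or.inl hp
      · exact Or.inr hq
    obtain ⟨V₀, hV₀, hxV₀, hmin⟩ := hfirst x
    -- the main finiteness argument, given a universal neighborhood S of x
    have main : ∀ S : Set X, x ∈ S → (∀ O, O ∈ P ∪ Q → x ∈ O → S ⊆ O) →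
        {b ∈ A '' (⋃ n, Vf n) | (b ∩ S).Nonempty}.Finite := by
      intro S hxS hU
      have hSV₀ : S ⊆ V₀ := hU V₀ (h𝒱PQ hV₀) hxV₀
      have hsub : {b ∈ A '' (⋃ n, Vf n) | (b ∩ S).Nonempty} ⊆
          A '' (⋃ m ∈ Set.Iic (ℓ V₀), {b ∈ Vf m | (b ∩ Nw m).Nonempty}) := by
        rintro b ⟨⟨V, hV, rfl⟩, y, hyA, hyS⟩
        have hle : ℓ V ≤ ℓ V₀ := by
          by_contra hgt
          push_neg at hgt
          exact hyA.2 (Set.mem_sUnion.mpr ⟨V₀, ⟨hV₀, hgt⟩, hSV₀ hyS⟩)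
        refine ⟨V, ?_, rfl⟩
        refine Set.mem_biUnion (Set.mem_Iic.mpr hle) ?_
        exact ⟨hℓmem V hV, ⟨y, hyA.1, hU (Nw (ℓ V)) (hNwPQ (ℓ V)) (hNw2 (ℓ V)) hyS⟩⟩
      have hfin : (⋃ m ∈ Set.Iic (ℓ V₀), {b ∈ Vf m | (b ∩ Nw m).Nonempty}).Finite :=
        Set.Finite.biUnion (Set.finite_Iic (ℓ V₀)) (fun m _ => hNw3 m)
      exact (hfin.image A).subset hsub
    rcases hC.2.1 hWC with hWP | hWQ
    · obtain ⟨S, hSP, hxS, hUniv⟩ :=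
        key_min (P := P) (Q := Q) (Pi := P) (Pj := Q) rfl hReg.2.1 hReg.1.2 hC2.1 x
      exact ⟨S, Or.inl ⟨⟨W, hWC, hWP, hxW⟩, hSP⟩, hxS, main S hxS hUniv⟩
    · obtain ⟨S, hSQ, hxS, hUniv⟩ :=
        key_min (P := P) (Q := Q) (Pi := Q) (Pj := P) (Set.union_comm Q P)
          hReg.2.2 hReg.1.1 hC2.2 x
      exact ⟨S, Or.inr ⟨⟨W, hWC, hWQ, hxW⟩, hSQ⟩, hxS, main S hxS hUniv⟩
end

section
/- Let (X,𝒫) be a regular σ-space. If every 𝒫-open cover 𝒰 of X has a 𝒫-open refinement 𝒱 covering X expressible as 𝒱 = ⋃_{n∈ℕ} Vₙ where each Vₙ is a locally finite collection in X, then every 𝒫-open cover of X has a locally finite refinement (not necessarily open) covering X. -/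
open Set

variable {X : Type*}

lemma finset_biInter_mem' {X : Type*} {P : Set (Set X)} (hP : IsSigmaStructure P)
    (f : ℕ → Set X) (hf : ∀ m, f m ∈ P) (s : Finset ℕ) :
    (⋂ m ∈ s, f m) ∈ P := by
  classical
  induction s using Finset.induction with
  | empty => simpa using hP.2.1
  | insert _ _ hx ih =>
    rw [Finset.set_biInter_insert]
    exact hP.2.2.2 _ (hf _) _ ih

theorem stmt_8 {X : Type*} (P : Set (Set X)) (hP : IsSigmaStructure P)
    (hReg : SRegular P)
    (h : ∀ U ⊆ P, ⋃₀ U = Set.univ →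
      ∃ V : ℕ → Set (Set X),
        (⋃ n, V n) ⊆ P ∧ ⋃₀ (⋃ n, V n) = Set.univ ∧
        (∀ b ∈ ⋃ n, V n, ∃ a ∈ U, b ⊆ a) ∧
        ∀ n, SLocallyFinite P (V n)) :
    ∀ U ⊆ P, ⋃₀ U = Set.univ →
      ∃ B : Set (Set X), ⋃₀ B = Set.univ ∧ (∀ b ∈ B, ∃ a ∈ U, b ⊆ a) ∧
        SLocallyFinite P B := by
  intro U hU hcov
  obtain ⟨V, hVP, hVcov, hVref, hVlf⟩ := h U hU hcov
  classical
  set A : ℕ → Set X := fun n => ⋃₀ V n with hA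
  set B : Set (Set X) := ⋃ n, (fun W => W \ ⋃ m < n, A m) '' (V n) with hB
  have hex : ∀ x : X, ∃ n, x ∈ A n := by
    intro x
    have hx : x ∈ ⋃₀ (⋃ n, V n) := hVcov ▸ mem_univ x
    obtain ⟨W, hW, hxW⟩ := hx
    obtain ⟨n, hn⟩ := mem_iUnion.mp hW
    exact ⟨n, W, hn, hxW⟩
  refine ⟨B, ?_, ?_, ?_⟩
  · apply eq_univ_of_forall
    intro x
    obtain ⟨W, hWn, hxW⟩ := Nat.find_spec (hex x)
    refine ⟨W \ ⋃ m < Nat.find (hex x), A m,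
      mem_iUnion.mpr ⟨Nat.find (hex x), ⟨W, hWn, rfl⟩⟩, hxW, ?_⟩
    simp only [mem_iUnion, not_exists]
    intro m hm
    exact Nat.find_min (hex x) hm
  · intro b hb
    obtain ⟨n, W, hWn, rfl⟩ : ∃ n W, W ∈ V n ∧ W \ ⋃ m < n, A m = b := by
      simpa [hB] using hb
    obtain ⟨a, ha, hWa⟩ := hVref W (mem_iUnion.mpr ⟨n, hWn⟩)
    exact ⟨a, ha, diff_subset.trans hWa⟩
  · intro x
    set n := Nat.find (hex x) with hn
    obtain ⟨W, hWn, hxW⟩ := Nat.find_spec (hex x)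
    choose N hNP hxN hNfin using fun m => hVlf m x
    refine ⟨W ∩ ⋂ m ∈ Finset.range (n + 1), N m,
      hP.2.2.2 _ (hVP (mem_iUnion.mpr ⟨n, hWn⟩)) _
        (finset_biInter_mem' hP N hNP _), ⟨hxW, ?_⟩, ?_⟩
    · exact mem_iInter₂.mpr fun m _ => hxN m
    · have key : {b ∈ B | (b ∩ (W ∩ ⋂ m ∈ Finset.range (n + 1), N m)).Nonempty} ⊆
          ⋃ k ∈ Finset.range (n + 1),
            (fun W' => W' \ ⋃ m < k, A m) ''
              {W' ∈ V k | (W' ∩ N k).Nonempty} := by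
        rintro b ⟨hbB, y, hyb, hyW, hyN⟩
        obtain ⟨k, W', hW'k, rfl⟩ : ∃ k W', W' ∈ V k ∧ W' \ ⋃ m < k, A m = b := by
          simpa [hB] using hbB
        have hkn : k ≤ n := by
          by_contra hk
          push_neg at hk
          have : y ∈ ⋃ m < k, A m :=
            mem_iUnion₂.mpr ⟨n, hk, ⟨W, hWn, hyW⟩⟩
          exact hyb.2 this
        have hyNk : y ∈ N k := by
          have := mem_iInter₂.mp hyN k (Finset.mem_range.mpr (Nat.lt_succ_of_le hkn))
          exact this
        exact mem_iUnion₂.mpr ⟨k, Finset.mem_range.mpr (Nat.lt_succ_of_le hkn),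
          ⟨W', ⟨hW'k, ⟨y, hyb.1, hyNk⟩⟩, rfl⟩⟩
      refine Set.Finite.subset ?_ key
      apply Set.Finite.biUnion (Finset.finite_toSet _)
      intro k _
      exact (hNfin k).image _
end

section
/- Let (X,𝒫) be a regular σ-space. If every 𝒫-open cover of X has a locally finite refinement covering X, then every 𝒫-open cover 𝒜 of X has a locally finite refinement S = {S_α : α ∈ Λ} covering X such that the collection of closures {𝒫-cl(S_α) : α ∈ Λ} is also a locally finite refinement of 𝒜 covering X. -/
open Set

variable {X : Type*}

theorem stmt_9 {X : Type*} (P : Set (Set X)) (hP : IsSigmaStructure P)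
    (hReg : SRegular P)
    (h : ∀ U ⊆ P, ⋃₀ U = Set.univ →
      ∃ B : Set (Set X), ⋃₀ B = Set.univ ∧ (∀ b ∈ B, ∃ a ∈ U, b ⊆ a) ∧
        SLocallyFinite P B) :
    ∀ A ⊆ P, ⋃₀ A = Set.univ →
      ∃ S : Set (Set X), ⋃₀ S = Set.univ ∧ (∀ s ∈ S, ∃ a ∈ A, s ⊆ a) ∧
        SLocallyFinite P S ∧
        ⋃₀ (sCl P '' S) = Set.univ ∧ (∀ t ∈ sCl P '' S, ∃ a ∈ A, t ⊆ a) ∧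
        SLocallyFinite P (sCl P '' S) := by
  intro A hA hcov
  have subset_sCl : ∀ M : Set X, M ⊆ sCl P M := by
    intro M x hx F hF; exact hF.2 hx
  have sCl_closed : ∀ M F : Set X, Fᶜ ∈ P → M ⊆ F → sCl P M ⊆ F := by
    intro M F hF hMF x hx; exact hx F ⟨hF, hMF⟩
  have key : ∀ x : X, ∃ U ∈ P, x ∈ U ∧ ∃ a ∈ A, sCl P U ⊆ a := by
    intro x
    obtain ⟨a, haA, hxa⟩ : ∃ a ∈ A, x ∈ a := by
      have : x ∈ ⋃₀ A := hcov ▸ mem_univ x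
      exact this
    obtain ⟨U, hU, V, hV, hxU, hcV, hUV⟩ :=
      hReg x aᶜ (by simpa using hA haA) (by simpa using hxa)
    refine ⟨U, hU, hxU, a, haA, ?_⟩
    have hUVc : U ⊆ Vᶜ := fun y hy hyV =>
      absurd hUV (by rw [Set.eq_empty_iff_forall_notMem]; push_neg; exact ⟨y, hy, hyV⟩)
    have h1 : sCl P U ⊆ Vᶜ := sCl_closed U Vᶜ (by simpa using hV) hUVc
    have h2 : Vᶜ ⊆ a := fun y hy => by
      by_contra hya
      exact hy (hcV hya)
    exact h1.trans h2
  choose U hUP hxU a haA hcl using key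
  obtain ⟨B, hBcov, hBref, hBlf⟩ := h (Set.range U) (by rintro _ ⟨x, rfl⟩; exact hUP x)
    (by
      apply Set.eq_univ_of_forall
      intro x
      exact ⟨U x, ⟨x, rfl⟩, hxU x⟩)
  have hBref' : ∀ b ∈ B, ∃ a' ∈ A, sCl P b ⊆ a' := by
    intro b hb
    obtain ⟨_, ⟨x, rfl⟩, hbU⟩ := hBref b hb
    refine ⟨a x, haA x, ?_⟩
    refine subset_trans ?_ (hcl x)
    intro y hy F hF
    exact hy F ⟨hF.1, hbU.trans hF.2⟩
  refine ⟨B, hBcov, ?_, hBlf, ?_, ?_, ?_⟩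
  · intro b hb
    obtain ⟨a', ha', hba⟩ := hBref' b hb
    exact ⟨a', ha', (subset_sCl b).trans hba⟩
  · apply Set.eq_univ_of_forall
    intro x
    have : x ∈ ⋃₀ B := hBcov ▸ mem_univ x
    obtain ⟨b, hb, hxb⟩ := this
    exact ⟨sCl P b, ⟨b, hb, rfl⟩, subset_sCl b hxb⟩
  · rintro _ ⟨b, hb, rfl⟩
    exact hBref' b hb
  · intro x
    obtain ⟨N, hN, hxN, hfin⟩ := hBlf x
    refine ⟨N, hN, hxN, ?_⟩
    have hsub : {t ∈ sCl P '' B | (t ∩ N).Nonempty} ⊆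
        sCl P '' {b ∈ B | (b ∩ N).Nonempty} := by
      rintro _ ⟨⟨b, hb, rfl⟩, hne⟩
      refine ⟨b, ⟨hb, ?_⟩, rfl⟩
      by_contra hbN
      rw [Set.not_nonempty_iff_eq_empty] at hbN
      have hbNc : b ⊆ Nᶜ := fun y hy hyN =>
        absurd hbN (by rw [Set.eq_empty_iff_forall_notMem]; push_neg; exact ⟨y, hy, hyN⟩)
      have : sCl P b ⊆ Nᶜ := sCl_closed b Nᶜ (by simpa using hN) hbNc
      obtain ⟨y, hy1, hy2⟩ := hne
      exact this hy1 hy2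
    exact Set.Finite.subset (hfin.image _) hsub
end

section
/- Let X = ℝ, let τ₁ be the cocountable topology on ℝ (open sets are ∅ and the complements of countable sets), and let τ₂ = {ℝ, ∅} ∪ {A ⊆ ℝ : A is countable}. Then the bispace (ℝ, τ₁, τ₂) is pairwise regular. -/
open Set

variable {X : Type*}

theorem stmt_11 :
    PairwiseRegular ({A : Set ℝ | A = ∅ ∨ Aᶜ.Countable})
      ({Set.univ, ∅} ∪ {A : Set ℝ | A.Countable}) := by
  constructor
  · intro x F hF hx
    rcases hF with h | h
    · exact absurd (by simpa [compl_empty_iff.mp h] using mem_univ x) hx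
    · refine ⟨Fᶜ, ?_, F, ?_, hx, subset_rfl, by simp⟩
      · exact Or.inr (by simpa using h)
      · exact Or.inr (by simpa using h)
  · intro x F hF hx
    refine ⟨{x}, Or.inr (Set.countable_singleton x), {x}ᶜ, Or.inr (by simp), rfl, ?_, by simp⟩
    intro y hy hxy
    exact hx (show x ∈ F by rwa [show y = x from hxy] at hy)
end

section
/- Let X = ℝ. Let τ₁ be the collection of all sets A ⊆ ℝ such that either (0,1) ⊆ ℝ \ A or A ∩ (0,1) is a union of open subintervals of (0,1); let τ₂ be the collection of all countable subsets of (0,1); and let τ be the collection of all countable unions of members of τ₁ ∪ τ₂. Then τ is a σ-space structure on ℝ but τ is not a topology on ℝ (it is not closed under arbitrary unions). -/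
open Set

variable {X : Type*}

/-- τ₁ of Example 3.1: sets A such that either (0,1) ⊆ ℝ \ A or
A ∩ (0,1) is a union of open subintervals of (0,1). -/
def exTau1 : Set (Set ℝ) :=
  {A | Set.Ioo (0:ℝ) 1 ⊆ Aᶜ ∨
    ∃ I : Set (Set ℝ),
      (∀ J ∈ I, ∃ a b : ℝ, J = Set.Ioo a b ∧ Set.Ioo a b ⊆ Set.Ioo (0:ℝ) 1) ∧
      A ∩ Set.Ioo (0:ℝ) 1 = ⋃₀ I}

/-- τ₂ of Example 3.1: all countable subsets of (0,1). -/
def exTau2 : Set (Set ℝ) :=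
  {A | A.Countable ∧ A ⊆ Set.Ioo (0:ℝ) 1}

/-- τ of Example 3.1: all countable unions of members of τ₁ ∪ τ₂. -/
def exTau : Set (Set ℝ) :=
  {A | ∃ f : ℕ → Set ℝ, (∀ n, f n ∈ exTau1 ∪ exTau2) ∧ A = ⋃ n, f n}

lemma mem_exTau_of_mem {A : Set ℝ} (h : A ∈ exTau1 ∪ exTau2) : A ∈ exTau :=
  ⟨fun _ => A, fun _ => h, (Set.iUnion_const A).symm⟩

lemma empty_mem_exTau1 : (∅ : Set ℝ) ∈ exTau1 :=
  Or.inl (by simp)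

lemma univ_mem_exTau1 : (Set.univ : Set ℝ) ∈ exTau1 := by
  refine Or.inr ⟨{Set.Ioo (0:ℝ) 1}, ?_, by simp⟩
  rintro J hJ
  simp only [mem_singleton_iff] at hJ
  exact ⟨0, 1, hJ, subset_rfl⟩

lemma exTau1_inter {A B : Set ℝ} (hA : A ∈ exTau1) (hB : B ∈ exTau1) :
    A ∩ B ∈ exTau1 := by
  rcases hA with hA | ⟨I, hI, hIA⟩
  · exact Or.inl (fun x hx => fun hx' => hA hx hx'.1)
  rcases hB with hB | ⟨I', hI', hIB⟩
  · exact Or.inl (fun x hx => fun hx' => hB hx hx'.2)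
  refine Or.inr ⟨Set.image2 (· ∩ ·) I I', ?_, ?_⟩
  · rintro J ⟨J₁, hJ₁, J₂, hJ₂, rfl⟩
    obtain ⟨a, b, rfl, hab⟩ := hI J₁ hJ₁
    obtain ⟨c, d, rfl, hcd⟩ := hI' J₂ hJ₂
    refine ⟨a ⊔ c, b ⊓ d, Set.Ioo_inter_Ioo, ?_⟩
    rw [← Set.Ioo_inter_Ioo]
    exact Set.inter_subset_left.trans hab
  · have : A ∩ B ∩ Set.Ioo (0:ℝ) 1
        = (A ∩ Set.Ioo (0:ℝ) 1) ∩ (B ∩ Set.Ioo (0:ℝ) 1) := by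
      ext x; simp; tauto
    rw [this, hIA, hIB]
    ext x
    simp only [mem_inter_iff, mem_sUnion, Set.mem_image2]
    constructor
    · rintro ⟨⟨J₁, hJ₁, hx₁⟩, ⟨J₂, hJ₂, hx₂⟩⟩
      exact ⟨J₁ ∩ J₂, ⟨J₁, hJ₁, J₂, hJ₂, rfl⟩, hx₁, hx₂⟩
    · rintro ⟨J, ⟨J₁, hJ₁, J₂, hJ₂, rfl⟩, hx₁, hx₂⟩
      exact ⟨⟨J₁, hJ₁, hx₁⟩, ⟨J₂, hJ₂, hx₂⟩⟩

lemma exTau12_inter {A B : Set ℝ} (hA : A ∈ exTau1 ∪ exTau2)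
    (hB : B ∈ exTau1 ∪ exTau2) : A ∩ B ∈ exTau1 ∪ exTau2 := by
  rcases hA with hA | hA
  · rcases hB with hB | hB
    · exact Or.inl (exTau1_inter hA hB)
    · exact Or.inr ⟨hB.1.mono Set.inter_subset_right,
        Set.inter_subset_right.trans hB.2⟩
  · exact Or.inr ⟨hA.1.mono Set.inter_subset_left,
      Set.inter_subset_left.trans hA.2⟩

lemma exTau_sUnion (S : Set (Set ℝ)) (hS : S.Countable) (hSP : S ⊆ exTau) :
    ⋃₀ S ∈ exTau := by
  rcases S.eq_empty_or_nonempty with rfl | hne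
  · simpa using mem_exTau_of_mem (Or.inl empty_mem_exTau1)
  obtain ⟨g, hg⟩ := (Set.countable_iff_exists_surjective hne).mp hS
  choose f hf hfeq using fun k : ℕ => hSP (g k).2
  refine ⟨fun n => f n.unpair.1 n.unpair.2, fun n => hf _ _, ?_⟩
  ext x
  simp only [mem_sUnion, mem_iUnion]
  constructor
  · rintro ⟨s, hs, hx⟩
    obtain ⟨k, hk⟩ := hg ⟨s, hs⟩
    have : x ∈ ⋃ m, f k m := by
      rw [← hfeq k]
      have : (g k : Set ℝ) = s := congrArg Subtype.val hk
      rwa [this]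
    obtain ⟨m, hm⟩ := mem_iUnion.mp this
    exact ⟨Nat.pair k m, by simpa [Nat.unpair_pair] using hm⟩
  · rintro ⟨n, hn⟩
    refine ⟨g n.unpair.1, (g n.unpair.1).2, ?_⟩
    rw [hfeq n.unpair.1]
    exact mem_iUnion.mpr ⟨n.unpair.2, hn⟩

lemma exTau_inter {A B : Set ℝ} (hA : A ∈ exTau) (hB : B ∈ exTau) :
    A ∩ B ∈ exTau := by
  obtain ⟨f, hf, rfl⟩ := hA
  obtain ⟨g, hg, rfl⟩ := hB
  refine ⟨fun n => f n.unpair.1 ∩ g n.unpair.2,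
    fun n => exTau12_inter (hf _) (hg _), ?_⟩
  ext x
  simp only [mem_inter_iff, mem_iUnion]
  constructor
  · rintro ⟨⟨n, hn⟩, ⟨m, hm⟩⟩
    exact ⟨Nat.pair n m, by simpa [Nat.unpair_pair] using ⟨hn, hm⟩⟩
  · rintro ⟨n, hn, hn'⟩
    exact ⟨⟨_, hn⟩, ⟨_, hn'⟩⟩

lemma irr_Ioo_not_countable :
    ¬ ({x ∈ Set.Ioo (0:ℝ) 1 | Irrational x}).Countable := by
  intro hc
  have hr : ({x : ℝ | ¬ Irrational x}).Countable := by
    have : {x : ℝ | ¬ Irrational x} = Set.range ((↑) : ℚ → ℝ) := by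
      ext x; simp [Irrational]
    rw [this]; exact Set.countable_range _
  have : (Set.Ioo (0:ℝ) 1).Countable := by
    refine Set.Countable.mono ?_ (hc.union hr)
    intro x hx
    by_cases h : Irrational x
    · exact Or.inl ⟨hx, h⟩
    · exact Or.inr h
  have := Set.Countable.le_aleph0 this
  rw [Cardinal.mk_Ioo_real (by norm_num : (0:ℝ) < 1)] at this
  exact absurd this (by simpa using Cardinal.aleph0_lt_continuum.not_ge)

theorem stmt_13 :
    IsSigmaStructure exTau ∧
    ¬ (∀ S : Set (Set ℝ), S ⊆ exTau → ⋃₀ S ∈ exTau) := by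
  constructor
  · refine ⟨mem_exTau_of_mem (Or.inl empty_mem_exTau1),
      mem_exTau_of_mem (Or.inl univ_mem_exTau1),
      exTau_sUnion, fun U hU V hV => exTau_inter hU hV⟩
  · intro h
    set T : Set ℝ := {x ∈ Set.Ioo (0:ℝ) 1 | Irrational x} with hT
    have hST : ⋃₀ ((fun x : ℝ => {x}) '' T) = T := by
      ext x; simp
    have hmem := h ((fun x : ℝ => {x}) '' T) ?_
    · rw [hST] at hmem
      obtain ⟨f, hf, hfeq⟩ := hmem
      have hsub : ∀ n, f n ⊆ T := fun n x hx => hfeq ▸ mem_iUnion.mpr ⟨n, hx⟩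
      have hcnt : ∀ n, (f n).Countable := by
        intro n
        rcases hf n with hf1 | hf2
        · rcases hf1 with h1 | ⟨I, hI, hIeq⟩
          · have : f n = ∅ := by
              ext x
              simp only [mem_empty_iff_false, iff_false]
              intro hx
              exact h1 (hsub n hx).1 hx
            simp [this]
          · have hfn : f n = ⋃₀ I := by
              rw [← hIeq]
              exact (Set.inter_eq_left.mpr (fun x hx => (hsub n hx).1)).symm
            -- every interval in I must be empty
            have : ∀ J ∈ I, J = ∅ := by
              intro J hJ
              obtain ⟨a, b, rfl, hab⟩ := hI J hJ
              by_contra hne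
              rw [← Ne, ← Set.nonempty_iff_ne_empty, Set.nonempty_Ioo] at hne
              obtain ⟨q, hq1, hq2⟩ := exists_rat_btwn hne
              have : (q : ℝ) ∈ T := hsub n (hfn ▸ ⟨_, hJ, hq1, hq2⟩)
              exact this.2 ⟨q, rfl⟩
            have : f n = ∅ := by
              rw [hfn]
              simp only [Set.sUnion_eq_empty]
              exact this
            simp [this]
        · exact hf2.1
      have : T.Countable := by
        rw [hfeq]
        exact Set.countable_iUnion hcnt
      exact irr_Ioo_not_countable this
    · rintro s ⟨x, hx, rfl⟩
      exact mem_exTau_of_mem (Or.inr ⟨Set.countable_singleton x,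
        Set.singleton_subset_iff.mpr hx.1⟩)
end

section
/- Let X = ℝ. Let τ₁ be the collection of all sets A ⊆ ℝ such that either (0,1) ⊆ ℝ \ A or A ∩ (0,1) is a union of open subintervals of (0,1); let τ₂ be the collection of all countable subsets of (0,1); and let τ be the collection of all countable unions of members of τ₁ ∪ τ₂. Then the σ-space (ℝ, τ) is regular. -/
open Set

variable {X : Type*}

lemma mem_exTau_of_union (A : Set ℝ) (h : A ∈ exTau1 ∪ exTau2) : A ∈ exTau := by
  exact ⟨fun _ => A, fun _ => h, (Set.iUnion_const A).symm⟩

lemma singleton_mem_exTau (x : ℝ) : {x} ∈ exTau := by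
  apply mem_exTau_of_union
  by_cases hx : x ∈ Set.Ioo (0:ℝ) 1
  · exact Or.inr ⟨Set.countable_singleton x, Set.singleton_subset_iff.mpr hx⟩
  · refine Or.inl (Or.inl ?_)
    intro y hy
    simp only [Set.mem_compl_iff, Set.mem_singleton_iff]
    rintro rfl; exact hx hy

lemma compl_singleton_mem_exTau (x : ℝ) : ({x} : Set ℝ)ᶜ ∈ exTau := by
  apply mem_exTau_of_union
  left; right
  by_cases hx : x ∈ Set.Ioo (0:ℝ) 1
  · refine ⟨{Set.Ioo 0 x, Set.Ioo x 1}, ?_, ?_⟩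
    · rintro J (rfl | rfl)
      · exact ⟨0, x, rfl, Set.Ioo_subset_Ioo le_rfl hx.2.le⟩
      · exact ⟨x, 1, rfl, Set.Ioo_subset_Ioo hx.1.le le_rfl⟩
    · ext y
      simp only [Set.mem_inter_iff, Set.mem_compl_iff, Set.mem_singleton_iff,
        Set.mem_Ioo, Set.sUnion_insert, Set.sUnion_singleton, Set.mem_union]
      constructor
      · rintro ⟨hne, h0, h1⟩
        rcases lt_or_gt_of_ne hne with h | h
        · exact Or.inl ⟨h0, h⟩
        · exact Or.inr ⟨h, h1⟩
      · rintro (⟨h0, h⟩ | ⟨h, h1⟩)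
        · exact ⟨ne_of_lt h, h0, h.trans hx.2⟩
        · exact ⟨ne_of_gt h, hx.1.trans h, h1⟩
  · refine ⟨{Set.Ioo 0 1}, ?_, ?_⟩
    · rintro J rfl; exact ⟨0, 1, rfl, subset_rfl⟩
    · rw [Set.sUnion_singleton]
      apply Set.inter_eq_right.mpr
      intro y hy
      simp only [Set.mem_compl_iff, Set.mem_singleton_iff]
      rintro rfl; exact hx hy

theorem stmt_14 : SRegular exTau := by
  intro x F _ hxF
  exact ⟨{x}, singleton_mem_exTau x, {x}ᶜ, compl_singleton_mem_exTau x,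
    rfl, fun y hy hyx => hxF (hyx ▸ hy), Set.inter_compl_self _⟩
end
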